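/- arXiv:2402.17615 — 7 statements merged into one kernel-verified Lean document; each statement's English description precedes it below -/
import Mathlib

section
/- If every bias function β_{i,j} is in region R, then the clamped update μ(B)_i = clamp_{[0,1]}(B_i + Σ_{j∈A_i} w_{j,i} β_{i,j}(B_j − B_i)) equals the unclamped value B_i + Σ_{j∈A_i} w_{j,i} β_{i,j}(B_j − B_i), i.e., the clamp is never active. -/
/-- A bias function is in the receptive-resistant region R. -/
def InRegionR (β : ℝ → ℝ) : Prop :=
  (∀ x : ℝ, x < 0 → x < β x ∧ β x < 0) ∧
  (∀ x : ℝ, 0 < x → 0 < β x ∧ β x < x) ∧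
  β 0 = 0

/-- Clamp a real number to the interval [0,1]. -/
def clamp01 (r : ℝ) : ℝ := min (max r 0) 1

theorem stmt_2 {A : Type*} [Fintype A] [DecidableEq A]
    (B : A → ℝ) (hB : ∀ k, B k ∈ Set.Icc (0:ℝ) 1)
    (N : A → Finset A) (w : A → A → ℝ)
    (hw : ∀ i, ∀ j ∈ N i, 0 ≤ w j i)
    (hsum : ∀ i, (N i).Nonempty → ∑ j ∈ N i, w j i = 1)
    (β : A → A → ℝ → ℝ) (hβ : ∀ i, ∀ j ∈ N i, InRegionR (β i j)) :
    ∀ i : A,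
      clamp01 (B i + ∑ j ∈ N i, w j i * β i j (B j - B i)) =
        B i + ∑ j ∈ N i, w j i * β i j (B j - B i) := by
  intro i
  obtain ⟨hBi0, hBi1⟩ := hB i
  -- bounds on each β term
  have hterm : ∀ j ∈ N i, -(B i) ≤ β i j (B j - B i) ∧ β i j (B j - B i) ≤ 1 - B i := by
    intro j hj
    obtain ⟨hneg, hpos, hzero⟩ := hβ i j hj
    obtain ⟨hBj0, hBj1⟩ := hB j
    rcases lt_trichotomy (B j - B i) 0 with h | h | h
    · obtain ⟨h1, h2⟩ := hneg _ h
      constructor <;> nlinarith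
    · rw [h, hzero]; constructor <;> linarith
    · obtain ⟨h1, h2⟩ := hpos _ h
      constructor <;> nlinarith
  rcases (N i).eq_empty_or_nonempty with he | hne
  · simp [he, clamp01, max_eq_left hBi0, min_eq_left hBi1]
  · have hlo : -(B i) ≤ ∑ j ∈ N i, w j i * β i j (B j - B i) := by
      calc -(B i) = ∑ j ∈ N i, w j i * (-(B i)) := by
            rw [← Finset.sum_mul, hsum i hne]; ring
        _ ≤ _ := Finset.sum_le_sum fun j hj =>
            mul_le_mul_of_nonneg_left (hterm j hj).1 (hw i j hj)
    have hhi : ∑ j ∈ N i, w j i * β i j (B j - B i) ≤ 1 - B i := by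
      calc ∑ j ∈ N i, w j i * β i j (B j - B i)
          ≤ ∑ j ∈ N i, w j i * (1 - B i) := Finset.sum_le_sum fun j hj =>
            mul_le_mul_of_nonneg_left (hterm j hj).2 (hw i j hj)
        _ = 1 - B i := by rw [← Finset.sum_mul, hsum i hne]; ring
    unfold clamp01
    rw [max_eq_left (by linarith), min_eq_left (by linarith)]
end

section
/- Under bias updates with all biases in region R, the sequence of maxima t ↦ max_i B^t_i is monotonically non-increasing and the sequence of minima t ↦ min_i B^t_i is monotonically non-decreasing; hence both sequences converge. -/
open Filter

theorem stmt_3 {A : Type*} [Fintype A] [Nonempty A] [DecidableEq A]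
    (N : A → Finset A) (w : A → A → ℝ)
    (hw : ∀ i, ∀ j ∈ N i, 0 ≤ w j i)
    (hsum : ∀ i, (N i).Nonempty → ∑ j ∈ N i, w j i = 1)
    (β : A → A → ℝ → ℝ) (hβ : ∀ i, ∀ j ∈ N i, InRegionR (β i j))
    (B : ℕ → A → ℝ) (hB0 : ∀ k, B 0 k ∈ Set.Icc (0:ℝ) 1)
    (hupd : ∀ t i, B (t+1) i = B t i + ∑ j ∈ N i, w j i * β i j (B t j - B t i)) :
    Antitone (fun t => Finset.univ.sup' Finset.univ_nonempty (B t)) ∧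
    Monotone (fun t => Finset.univ.inf' Finset.univ_nonempty (B t)) ∧
    (∃ U : ℝ, Tendsto (fun t => Finset.univ.sup' Finset.univ_nonempty (B t)) atTop (nhds U)) ∧
    (∃ L : ℝ, Tendsto (fun t => Finset.univ.inf' Finset.univ_nonempty (B t)) atTop (nhds L)) := by
  set M : ℕ → ℝ := fun t => Finset.univ.sup' Finset.univ_nonempty (B t) with hM
  set m : ℕ → ℝ := fun t => Finset.univ.inf' Finset.univ_nonempty (B t) with hm
  -- key bounds
  have hkeyU : ∀ t i, B (t+1) i ≤ M t := by
    intro t i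
    have hiM : B t i ≤ M t := Finset.le_sup' _ (Finset.mem_univ i)
    rw [hupd t i]
    rcases (N i).eq_empty_or_nonempty with he | hne
    · simp [he, hiM]
    · have hb : ∀ j ∈ N i, w j i * β i j (B t j - B t i) ≤ w j i * (M t - B t i) := by
        intro j hj
        refine mul_le_mul_of_nonneg_left ?_ (hw i j hj)
        have hjM : B t j ≤ M t := Finset.le_sup' _ (Finset.mem_univ j)
        obtain ⟨hneg, hpos, hzero⟩ := hβ i j hj
        rcases lt_trichotomy (B t j - B t i) 0 with h | h | h
        · have := (hneg _ h).2
          linarith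
        · rw [h, hzero]; linarith
        · have := (hpos _ h).2
          linarith
      calc B t i + ∑ j ∈ N i, w j i * β i j (B t j - B t i)
          ≤ B t i + ∑ j ∈ N i, w j i * (M t - B t i) := by
            exact add_le_add_right (Finset.sum_le_sum hb) _
        _ = B t i + (∑ j ∈ N i, w j i) * (M t - B t i) := by rw [Finset.sum_mul]
        _ = M t := by rw [hsum i hne]; ring
  have hkeyL : ∀ t i, m t ≤ B (t+1) i := by
    intro t i
    have him : m t ≤ B t i := Finset.inf'_le _ (Finset.mem_univ i)
    rw [hupd t i]
    rcases (N i).eq_empty_or_nonempty with he | hne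
    · simp [he, him]
    · have hb : ∀ j ∈ N i, w j i * (m t - B t i) ≤ w j i * β i j (B t j - B t i) := by
        intro j hj
        refine mul_le_mul_of_nonneg_left ?_ (hw i j hj)
        have hjm : m t ≤ B t j := Finset.inf'_le _ (Finset.mem_univ j)
        obtain ⟨hneg, hpos, hzero⟩ := hβ i j hj
        rcases lt_trichotomy (B t j - B t i) 0 with h | h | h
        · have := (hneg _ h).1
          linarith
        · rw [h, hzero]; linarith
        · have := (hpos _ h).1
          linarith
      calc m t = B t i + (∑ j ∈ N i, w j i) * (m t - B t i) := by rw [hsum i hne]; ring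
        _ = B t i + ∑ j ∈ N i, w j i * (m t - B t i) := by rw [Finset.sum_mul]
        _ ≤ B t i + ∑ j ∈ N i, w j i * β i j (B t j - B t i) := by
            exact add_le_add_right (Finset.sum_le_sum hb) _
  have hanti : Antitone M := by
    apply antitone_nat_of_succ_le
    intro t
    exact Finset.sup'_le _ _ fun i _ => hkeyU t i
  have hmono : Monotone m := by
    apply monotone_nat_of_le_succ
    intro t
    exact Finset.le_inf' _ _ fun i _ => hkeyL t i
  have hms : ∀ t, m t ≤ M t := by
    intro t
    obtain ⟨i⟩ := ‹Nonempty A›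
    exact le_trans (Finset.inf'_le _ (Finset.mem_univ i)) (Finset.le_sup' _ (Finset.mem_univ i))
  refine ⟨hanti, hmono, ?_, ?_⟩
  · refine ⟨⨅ t, M t, tendsto_atTop_ciInf hanti ⟨m 0, ?_⟩⟩
    rintro x ⟨t, rfl⟩
    exact le_trans (hmono (Nat.zero_le t)) (hms t)
  · refine ⟨⨆ t, m t, tendsto_atTop_ciSup hmono ⟨M 0, ?_⟩⟩
    rintro x ⟨t, rfl⟩
    exact le_trans (hms t) (hanti (Nat.zero_le t))
end

section
/- (Extreme Agents Reduction) Suppose all biases are in region R, min(B) ≠ max(B), and let M = max(B). If the influence graph contains a directed path i_1,…,i_m with B_{i_1} < M and B_{i_m} = M, then the number of agents j with μ(B)_j ≥ M is strictly smaller than the number of agents j with B_j ≥ M. -/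
open Finset

theorem stmt_5 {A : Type*} [Fintype A] [Nonempty A] [DecidableEq A]
    (I : A → A → ℝ) (hI : ∀ j i, 0 ≤ I j i)
    (β : A → A → ℝ → ℝ)
    (hβ : ∀ i j, 0 < I j i → InRegionR (β i j))
    (B : A → ℝ) (hB : ∀ k, B k ∈ Set.Icc (0:ℝ) 1)
    (M : ℝ) (hM : M = Finset.univ.sup' Finset.univ_nonempty B)
    (hne : Finset.univ.inf' Finset.univ_nonempty B ≠ M)
    -- the clamped/unclamped update with normalized weights
    (μB : A → ℝ)
    (hμ : ∀ i, μB i = B i + ∑ j ∈ Finset.univ.filter (fun j => 0 < I j i),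
        (I j i / ∑ k ∈ Finset.univ.filter (fun k => 0 < I k i), I k i) * β i j (B j - B i))
    -- a directed path i₁ … iₘ with B i₁ < M and B iₘ = M
    (m : ℕ) (p : ℕ → A)
    (hpath : ∀ k < m, 0 < I (p k) (p (k+1)))
    (hp0 : B (p 0) < M) (hpm : B (p m) = M) :
    (Finset.univ.filter (fun j => M ≤ μB j)).card <
      (Finset.univ.filter (fun j => M ≤ B j)).card := by
  have hMmax : ∀ k, B k ≤ M := by
    intro k; rw [hM]; exact le_sup' B (mem_univ k)
  -- subset
  have hsub : (univ.filter fun j => M ≤ μB j) ⊆ (univ.filter fun j => M ≤ B j) := by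
    intro i hi
    simp only [mem_filter, mem_univ, true_and] at hi ⊢
    by_contra hBi
    push_neg at hBi
    set s := univ.filter (fun k => 0 < I k i) with hs
    rcases s.eq_empty_or_nonempty with he | hne'
    · rw [hμ i, ← hs, he, Finset.sum_empty, add_zero] at hi
      exact absurd hi (not_le.mpr hBi)
    · set T := ∑ k ∈ s, I k i with hT
      have hTpos : 0 < T := Finset.sum_pos (fun k hk => (mem_filter.mp hk).2) hne'
      have hlt : ∑ j ∈ s, (I j i / T) * β i j (B j - B i)
          < ∑ j ∈ s, (I j i / T) * (M - B i) := by
        refine Finset.sum_lt_sum_of_nonempty hne' (fun j hj => ?_)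
        have hIj : 0 < I j i := (mem_filter.mp hj).2
        have hw : 0 < I j i / T := div_pos hIj hTpos
        refine mul_lt_mul_of_pos_left ?_ hw
        obtain ⟨h1, h2, h3⟩ := hβ i j hIj
        rcases lt_trichotomy (B j - B i) 0 with hx | hx | hx
        · exact lt_of_lt_of_le (h1 _ hx).2 (by linarith)
        · rw [hx, h3]; linarith
        · exact lt_of_lt_of_le (h2 _ hx).2 (by have := hMmax j; linarith)
      have heq : ∑ j ∈ s, (I j i / T) * (M - B i) = M - B i := by
        rw [← Finset.sum_mul, ← Finset.sum_div, ← hT, div_self hTpos.ne', one_mul]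
      rw [hμ i] at hi
      rw [← hs, ← hT] at hi
      rw [heq] at hlt
      linarith
  -- witness
  set S := (Finset.range (m+1)).filter (fun k => B (p k) < M) with hS
  have hS0 : (0:ℕ) ∈ S := by
    simp [hS, Finset.mem_range, hp0]
  have hSne : S.Nonempty := ⟨0, hS0⟩
  set K := S.max' hSne with hK
  have hKmem : K ∈ S := S.max'_mem hSne
  have hKle : K ≤ m := Nat.lt_succ_iff.mp (Finset.mem_range.mp (mem_filter.mp hKmem).1)
  have hBK : B (p K) < M := (mem_filter.mp hKmem).2
  have hKm : K < m := by
    rcases lt_or_eq_of_le hKle with h | h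
    · exact h
    · rw [h] at hBK; rw [hpm] at hBK; exact absurd hBK (lt_irrefl M)
  have hK1 : B (p (K+1)) = M := by
    by_contra hc
    have hlt : B (p (K+1)) < M := lt_of_le_of_ne (hMmax _) hc
    have : (K+1) ∈ S := by
      simp only [hS, mem_filter, Finset.mem_range]
      exact ⟨Nat.succ_lt_succ hKm, hlt⟩
    have := S.le_max' _ this
    omega
  set i := p (K+1) with hi
  -- show μB i < M
  have hwit : ¬ (M ≤ μB i) := by
    set s := univ.filter (fun k => 0 < I k i) with hs
    have hmem : p K ∈ s := by
      simp only [hs, mem_filter, mem_univ, true_and]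
      exact hpath K hKm
    have hne' : s.Nonempty := ⟨_, hmem⟩
    set T := ∑ k ∈ s, I k i with hT
    have hTpos : 0 < T := Finset.sum_pos (fun k hk => (mem_filter.mp hk).2) hne'
    have hle : ∀ j ∈ s, (I j i / T) * β i j (B j - B i) ≤ (fun _ : A => (0:ℝ)) j := by
      intro j hj
      have hIj : 0 < I j i := (mem_filter.mp hj).2
      have hw : 0 ≤ I j i / T := le_of_lt (div_pos hIj hTpos)
      obtain ⟨h1, h2, h3⟩ := hβ i j hIj
      have hx : B j - B i ≤ 0 := by have := hMmax j; rw [hK1]; linarith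
      rcases lt_or_eq_of_le hx with hx' | hx'
      · exact mul_nonpos_of_nonneg_of_nonpos hw (le_of_lt (h1 _ hx').2)
      · rw [hx', h3, mul_zero]
    have hstrict : (I (p K) i / T) * β i (p K) (B (p K) - B i) < 0 := by
      have hIj : 0 < I (p K) i := hpath K hKm
      have hw : 0 < I (p K) i / T := div_pos hIj hTpos
      obtain ⟨h1, _, _⟩ := hβ i (p K) hIj
      have hx : B (p K) - B i < 0 := by rw [hK1]; linarith
      exact mul_neg_of_pos_of_neg hw (h1 _ hx).2
    have hsum : ∑ j ∈ s, (I j i / T) * β i j (B j - B i) < 0 := by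
      calc ∑ j ∈ s, (I j i / T) * β i j (B j - B i)
          < ∑ _j ∈ s, (0:ℝ) := Finset.sum_lt_sum hle ⟨p K, hmem, hstrict⟩
        _ = 0 := Finset.sum_const_zero
    rw [hμ i, ← hs, ← hT]
    push_neg
    linarith [hsum]
  have hiin : i ∈ univ.filter fun j => M ≤ B j := by
    simp [hK1]
  have hinot : i ∉ univ.filter fun j => M ≤ μB j := by
    simp only [mem_filter, mem_univ, true_and]; exact hwit
  exact Finset.card_lt_card (Finset.ssubset_iff_of_subset hsub |>.mpr ⟨i, hiin, hinot⟩)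
end

section
/- Under bias updates with all biases in R, any agent i with B_i < max(B) satisfies μ(B)_i < max(B); i.e., no agent strictly below the maximum can reach the maximum after one update step. -/
theorem stmt_6 {A : Type*} [Fintype A] [Nonempty A] [DecidableEq A]
    (N : A → Finset A) (w : A → A → ℝ)
    (hw : ∀ i, ∀ j ∈ N i, 0 < w j i)
    (hsum : ∀ i, (N i).Nonempty → ∑ j ∈ N i, w j i = 1)
    (β : A → A → ℝ → ℝ) (hβ : ∀ i, ∀ j ∈ N i, InRegionR (β i j))
    (B : A → ℝ) (hB : ∀ k, B k ∈ Set.Icc (0:ℝ) 1)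
    (i : A) (hi : B i < Finset.univ.sup' Finset.univ_nonempty B) :
    B i + ∑ j ∈ N i, w j i * β i j (B j - B i) <
      Finset.univ.sup' Finset.univ_nonempty B := by
  set M := Finset.univ.sup' Finset.univ_nonempty B with hM
  rcases (N i).eq_empty_or_nonempty with he | hne
  · simp [he, hi]
  · have key : ∀ j ∈ N i, w j i * β i j (B j - B i) < w j i * (M - B i) := by
      intro j hj
      apply mul_lt_mul_of_pos_left _ (hw i j hj)
      obtain ⟨h1, h2, h3⟩ := hβ i j hj
      have hjM : B j ≤ M := Finset.le_sup' B (Finset.mem_univ j)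
      rcases lt_trichotomy (B j - B i) 0 with h | h | h
      · exact lt_of_lt_of_le (h1 _ h).2 (by linarith)
      · rw [h, h3]; linarith
      · exact lt_of_lt_of_le (h2 _ h).2 (by linarith)
    have := Finset.sum_lt_sum_of_nonempty hne key
    have hs : ∑ j ∈ N i, w j i * (M - B i) = M - B i := by
      rw [← Finset.sum_mul, hsum i hne, one_mul]
    linarith
end

section
/- Suppose all biases are in region R, min(B) ≠ max(B), and the influence graph has a directed path from some agent with belief < max(B) to some agent with belief = max(B) in every intermediate state; then after n−1 applications of the update (n = number of agents), the maximum strictly decreases: max(μ^{n−1}(B)) < max(B). -/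
/-- Discrete intermediate value: a crossing index for a predicate. -/
lemma stmt7_crossing (Q : ℕ → Prop) (m : ℕ) (h0 : ¬ Q 0) (hm : Q m) :
    ∃ l < m, ¬ Q l ∧ Q (l + 1) := by
  classical
  induction m with
  | zero => exact absurd hm h0
  | succ m ih =>
    by_cases h : Q m
    · obtain ⟨l, hl, h1, h2⟩ := ih h
      exact ⟨l, Nat.lt_succ_of_lt hl, h1, h2⟩
    · exact ⟨m, Nat.lt_succ_self m, h, hm⟩

theorem stmt_7 {A : Type*} [Fintype A] [Nonempty A] [DecidableEq A]
    (N : A → Finset A) (E : A → A → Prop) (hNE : ∀ i j, j ∈ N i ↔ E j i)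
    (w : A → A → ℝ)
    (hw : ∀ i, ∀ j ∈ N i, 0 < w j i)
    (hsum : ∀ i, (N i).Nonempty → ∑ j ∈ N i, w j i = 1)
    (β : A → A → ℝ → ℝ) (hβ : ∀ i, ∀ j ∈ N i, InRegionR (β i j))
    (μ : (A → ℝ) → (A → ℝ))
    (hμ : ∀ C i, μ C i = C i + ∑ j ∈ N i, w j i * β i j (C j - C i))
    (B : A → ℝ) (hB : ∀ k, B k ∈ Set.Icc (0:ℝ) 1)
    (hne : Finset.univ.inf' Finset.univ_nonempty B ≠
           Finset.univ.sup' Finset.univ_nonempty B)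
    -- in every intermediate state, a directed path from an agent strictly below
    -- the current maximum to an agent at the current maximum
    (hpath : ∀ k : ℕ,
      Finset.univ.inf' Finset.univ_nonempty (μ^[k] B) ≠
        Finset.univ.sup' Finset.univ_nonempty (μ^[k] B) →
      ∃ (m : ℕ) (p : ℕ → A),
        (∀ l < m, E (p l) (p (l+1))) ∧
        (μ^[k] B) (p 0) < Finset.univ.sup' Finset.univ_nonempty (μ^[k] B) ∧
        (μ^[k] B) (p m) = Finset.univ.sup' Finset.univ_nonempty (μ^[k] B)) :
    Finset.univ.sup' Finset.univ_nonempty (μ^[Fintype.card A - 1] B) <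
      Finset.univ.sup' Finset.univ_nonempty B := by
  classical
  set M : ℝ := Finset.univ.sup' Finset.univ_nonempty B with hM
  set n : ℕ := Fintype.card A with hn
  -- basic facts about β on nonpositive / general inputs
  have hβnp : ∀ i, ∀ j ∈ N i, ∀ x : ℝ, x ≤ 0 → β i j x ≤ 0 := by
    intro i j hj x hx
    obtain ⟨h1, _, h3⟩ := hβ i j hj
    rcases lt_or_eq_of_le hx with h | h
    · exact (h1 x h).2.le
    · rw [h, h3]
  have hβneg : ∀ i, ∀ j ∈ N i, ∀ x : ℝ, x < 0 → β i j x < 0 := by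
    intro i j hj x hx; exact ((hβ i j hj).1 x hx).2
  -- key1 : pointwise upper bound μ C i ≤ sup' C
  have key1 : ∀ (C : A → ℝ) (i : A),
      μ C i ≤ Finset.univ.sup' Finset.univ_nonempty C := by
    intro C i
    set S : ℝ := Finset.univ.sup' Finset.univ_nonempty C with hS
    have hiS : C i ≤ S := Finset.le_sup' C (Finset.mem_univ i)
    have hterm : ∀ j ∈ N i, w j i * β i j (C j - C i) ≤ w j i * (S - C i) := by
      intro j hj
      have hb : β i j (C j - C i) ≤ S - C i := by
        rcases le_or_gt (C j - C i) 0 with h | h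
        · exact le_trans (hβnp i j hj _ h) (by linarith)
        · have := ((hβ i j hj).2.1 _ h).2
          have hjS : C j ≤ S := Finset.le_sup' C (Finset.mem_univ j)
          linarith
      exact mul_le_mul_of_nonneg_left hb (hw i j hj).le
    have hsum' : ∑ j ∈ N i, w j i * β i j (C j - C i) ≤ S - C i := by
      calc ∑ j ∈ N i, w j i * β i j (C j - C i)
          ≤ ∑ j ∈ N i, w j i * (S - C i) := Finset.sum_le_sum hterm
        _ = (∑ j ∈ N i, w j i) * (S - C i) := by rw [Finset.sum_mul]
        _ ≤ S - C i := by
            by_cases hN : (N i).Nonempty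
            · rw [hsum i hN, one_mul]
            · rw [Finset.not_nonempty_iff_eq_empty.mp hN, Finset.sum_empty,
                zero_mul]; linarith
    rw [hμ]; linarith
  -- key2 : strictly below the max stays strictly below
  have key2 : ∀ (C : A → ℝ) (i : A),
      C i < Finset.univ.sup' Finset.univ_nonempty C →
      μ C i < Finset.univ.sup' Finset.univ_nonempty C := by
    intro C i hi
    set S : ℝ := Finset.univ.sup' Finset.univ_nonempty C with hS
    by_cases hN : (N i).Nonempty
    · have hterm : ∀ j ∈ N i, w j i * β i j (C j - C i) < w j i * (S - C i) := by
        intro j hj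
        have hb : β i j (C j - C i) < S - C i := by
          rcases le_or_gt (C j - C i) 0 with h | h
          · exact lt_of_le_of_lt (hβnp i j hj _ h) (by linarith)
          · have := ((hβ i j hj).2.1 _ h).2
            have hjS : C j ≤ S := Finset.le_sup' C (Finset.mem_univ j)
            linarith
        exact (mul_lt_mul_iff_right₀ (hw i j hj)).mpr hb
      have hsum' : ∑ j ∈ N i, w j i * β i j (C j - C i) < S - C i := by
        calc ∑ j ∈ N i, w j i * β i j (C j - C i)
            < ∑ j ∈ N i, w j i * (S - C i) :=
              Finset.sum_lt_sum_of_nonempty hN hterm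
          _ = (∑ j ∈ N i, w j i) * (S - C i) := by rw [Finset.sum_mul]
          _ = S - C i := by rw [hsum i hN, one_mul]
      rw [hμ]; linarith
    · rw [hμ, Finset.not_nonempty_iff_eq_empty.mp hN, Finset.sum_empty]
      linarith
  -- key3 : an agent at the max with a strictly-lower in-neighbor drops
  have key3 : ∀ (C : A → ℝ) (i j : A), j ∈ N i → (∀ a, C a ≤ C i) →
      C j < C i → μ C i < C i := by
    intro C i j hj hmax hji
    have hsum' : ∑ a ∈ N i, w a i * β i a (C a - C i) < 0 := by
      have h0 : ∑ a ∈ N i, (0 : ℝ) = 0 := Finset.sum_const_zero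
      have := Finset.sum_lt_sum
        (f := fun a => w a i * β i a (C a - C i)) (g := fun _ => (0 : ℝ))
        (by
          intro a ha
          exact mul_nonpos_of_nonneg_of_nonpos (hw i a ha).le
            (hβnp i a ha _ (by linarith [hmax a])))
        ⟨j, hj, mul_neg_of_pos_of_neg (hw i j hj)
          (hβneg i j hj _ (by linarith))⟩
      simpa [h0] using this
    rw [hμ]; linarith
  -- sup' is non-increasing along μ
  have supmono : ∀ C : A → ℝ,
      Finset.univ.sup' Finset.univ_nonempty (μ C) ≤
        Finset.univ.sup' Finset.univ_nonempty C := by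
    intro C
    exact Finset.sup'_le _ _ fun i _ => key1 C i
  -- sup' of iterates is ≤ M
  have supM : ∀ k, Finset.univ.sup' Finset.univ_nonempty (μ^[k] B) ≤ M := by
    intro k
    induction k with
    | zero => simp [hM]
    | succ k ih =>
      rw [Function.iterate_succ_apply']
      exact le_trans (supmono _) ih
  -- the main counting induction
  have main : ∀ k,
      Finset.univ.sup' Finset.univ_nonempty (μ^[k] B) < M ∨
      k + 1 ≤ (Finset.univ.filter (fun i => (μ^[k] B) i < M)).card := by
    intro k
    induction k with
    | zero =>
      right
      have hinfle : Finset.univ.inf' Finset.univ_nonempty B ≤ M := by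
        obtain ⟨i⟩ := (inferInstance : Nonempty A)
        exact le_trans (Finset.inf'_le B (Finset.mem_univ i))
          (Finset.le_sup' B (Finset.mem_univ i))
      have hinflt : Finset.univ.inf' Finset.univ_nonempty B < M :=
        lt_of_le_of_ne hinfle hne
      obtain ⟨i, _, hi⟩ := Finset.exists_mem_eq_inf' Finset.univ_nonempty B
      have hiU : i ∈ Finset.univ.filter (fun i => (μ^[0] B) i < M) := by
        simp only [Finset.mem_filter, Function.iterate_zero_apply]
        exact Finset.mem_filter.mpr ⟨Finset.mem_univ i, by rw [← hi]; exact hinflt⟩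
      exact Finset.card_pos.mpr ⟨i, hiU⟩
    | succ k ih =>
      set C : A → ℝ := μ^[k] B with hC
      have hCsucc : μ^[k + 1] B = μ C := Function.iterate_succ_apply' μ k B
      rcases ih with hlt | hcard
      · left
        rw [hCsucc]
        exact lt_of_le_of_lt (supmono C) hlt
      · by_cases hlt : Finset.univ.sup' Finset.univ_nonempty (μ^[k + 1] B) < M
        · exact Or.inl hlt
        · right
          have hsupC1 : Finset.univ.sup' Finset.univ_nonempty (μ^[k + 1] B) = M :=
            le_antisymm (supM (k + 1)) (not_lt.mp hlt)
          have hsupC : Finset.univ.sup' Finset.univ_nonempty C = M := by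
            refine le_antisymm (supM k) ?_
            rw [← hsupC1, hCsucc]
            exact supmono C
          -- U k is nonempty, so min ≠ max at step k
          have hUk : 1 ≤ (Finset.univ.filter (fun i => C i < M)).card :=
            le_trans (Nat.le_add_left 1 k) hcard
          obtain ⟨i0, hi0⟩ := Finset.card_pos.mp hUk
          rw [Finset.mem_filter] at hi0
          have hinf : Finset.univ.inf' Finset.univ_nonempty C ≠
              Finset.univ.sup' Finset.univ_nonempty C := by
            have h1 : Finset.univ.inf' Finset.univ_nonempty C ≤ C i0 :=
              Finset.inf'_le C (Finset.mem_univ i0)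
            rw [hsupC]
            intro h; rw [h] at h1; exact absurd (lt_of_le_of_lt h1 hi0.2) (lt_irrefl M)
          obtain ⟨m, p, hedge, hp0, hpm⟩ := hpath k hinf
          rw [hsupC] at hp0 hpm
          -- find a crossing edge
          obtain ⟨l, hlm, hQl, hQl1⟩ := stmt7_crossing (fun l => M ≤ C (p l)) m
            (not_le.mpr hp0) (le_of_eq hpm.symm)
          have hCl : C (p l) < M := not_le.mp hQl
          have hCl1 : C (p (l + 1)) = M := by
            refine le_antisymm ?_ hQl1
            calc C (p (l + 1)) ≤ Finset.univ.sup' Finset.univ_nonempty C :=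
                  Finset.le_sup' C (Finset.mem_univ _)
              _ = M := hsupC
          -- the at-max agent drops below M
          have hmem : p l ∈ N (p (l + 1)) := (hNE (p (l + 1)) (p l)).mpr (hedge l hlm)
          have hdrop : μ C (p (l + 1)) < M := by
            have := key3 C (p (l + 1)) (p l) hmem
              (fun a => by
                rw [hCl1]
                exact le_trans (Finset.le_sup' C (Finset.mem_univ a)) hsupC.le)
              (by rw [hCl1]; exact hCl)
            rwa [hCl1] at this
          -- U k ∪ {p (l+1)} ⊆ U (k+1)
          have hsubset : insert (p (l + 1)) (Finset.univ.filter (fun i => C i < M)) ⊆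
              Finset.univ.filter (fun i => (μ^[k + 1] B) i < M) := by
            intro a ha
            rw [Finset.mem_insert] at ha
            rw [Finset.mem_filter, hCsucc]
            refine ⟨Finset.mem_univ a, ?_⟩
            rcases ha with rfl | ha
            · exact hdrop
            · rw [Finset.mem_filter] at ha
              have := key2 C a (by rw [hsupC]; exact ha.2)
              rwa [hsupC] at this
          have hnotmem : p (l + 1) ∉ Finset.univ.filter (fun i => C i < M) := by
            rw [Finset.mem_filter]
            intro h
            rw [hCl1] at h
            exact absurd h.2 (lt_irrefl M)
          calc k + 1 + 1 ≤ (Finset.univ.filter (fun i => C i < M)).card + 1 := by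
                omega
            _ = (insert (p (l + 1)) (Finset.univ.filter (fun i => C i < M))).card :=
                (Finset.card_insert_of_notMem hnotmem).symm
            _ ≤ (Finset.univ.filter (fun i => (μ^[k + 1] B) i < M)).card :=
                Finset.card_le_card hsubset
  -- conclude at k = n - 1
  have hn1 : 1 ≤ n := Fintype.card_pos
  rcases main (n - 1) with h | h
  · exact h
  · have hall : Finset.univ.filter (fun i => (μ^[n - 1] B) i < M) = Finset.univ := by
      apply Finset.eq_univ_of_card
      refine le_antisymm (Finset.card_filter_le _ _) ?_
      omega
    have : ∀ i, (μ^[n - 1] B) i < M := by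
      intro i
      have := hall ▸ Finset.mem_univ i
      have hi : i ∈ Finset.univ.filter (fun i => (μ^[n - 1] B) i < M) := by
        rw [hall]; exact Finset.mem_univ i
      exact (Finset.mem_filter.mp hi).2
    exact (Finset.sup'_lt_iff Finset.univ_nonempty).mpr fun i _ => this i
end

section
/- (Discontinuous bias counterexample) Consider two agents mutually influencing each other with weight 1, both using the bias f(x) = x/8 for |x| ≤ 1/2, f(x) = (x−1/2)/8 for x > 1/2, f(x) = (x+1/2)/8 for x < −1/2, and initial beliefs (1, 0). Then for all t, B^t_1 − B^t_2 > 1/2, so the agents never converge to consensus. -/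
open Filter

/-- The discontinuous bias function of the counterexample. -/
noncomputable def f (x : ℝ) : ℝ :=
  if x > 1/2 then (x - 1/2)/8
  else if x < -(1/2) then (x + 1/2)/8
  else x/8

theorem stmt_15 (B : ℕ → ℝ × ℝ)
    (hB0 : B 0 = (1, 0))
    (hupd : ∀ t, B (t+1) =
      ((B t).1 + f ((B t).2 - (B t).1), (B t).2 + f ((B t).1 - (B t).2))) :
    (∀ t, (B t).1 - (B t).2 > 1/2) ∧
    ¬ ∃ v : ℝ, Tendsto (fun t => (B t).1) atTop (nhds v) ∧
        Tendsto (fun t => (B t).2) atTop (nhds v) := by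
  have hd : ∀ t, (B t).1 - (B t).2 > 1/2 := by
    intro t
    induction t with
    | zero => rw [hB0]; norm_num
    | succ n ih =>
      rw [hupd n]
      simp only
      have h1 : f ((B n).2 - (B n).1) = ((B n).2 - (B n).1 + 1/2)/8 := by
        unfold f
        rw [if_neg (by linarith), if_pos (by linarith)]
      have h2 : f ((B n).1 - (B n).2) = ((B n).1 - (B n).2 - 1/2)/8 := by
        unfold f
        rw [if_pos (by linarith)]
      rw [h1, h2]; linarith
  refine ⟨hd, ?_⟩
  rintro ⟨v, h1, h2⟩
  have h0 : Tendsto (fun t => (B t).1 - (B t).2) atTop (nhds 0) := by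
    simpa using h1.sub h2
  have := ge_of_tendsto h0 (Eventually.of_forall fun t => le_of_lt (hd t))
  norm_num at this
end

section
/- (Malleable bias counterexample) For the two-agent symmetric update with bias g(x) = arctan(x)/arctan(1), if the disagreement d_t = B^t_2 − B^t_1 satisfies 0 < d_t < 1, then |d_{t+1}| > d_t where d_{t+1} = d_t − 2g(d_t) computed before clamping; in particular disagreement magnitude strictly increases, since g(x) > x for 0 < x < 1. -/
noncomputable def g (x : ℝ) : ℝ := Real.arctan x / Real.arctan 1

lemma arctan_concave : StrictConcaveOn ℝ (Set.Icc (0:ℝ) 1) Real.arctan := by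
  apply StrictAntiOn.strictConcaveOn_of_deriv (convex_Icc 0 1)
    Real.continuous_arctan.continuousOn
  rw [Real.deriv_arctan]
  intro x hx y hy hxy
  rw [interior_Icc] at hx hy
  have h1 : (0:ℝ) < 1 + x ^ 2 := by positivity
  have h2 : (0:ℝ) < 1 + y ^ 2 := by positivity
  rw [div_lt_div_iff₀ h2 h1]
  nlinarith [hx.1, hy.1]

lemma key (d : ℝ) (hd0 : 0 < d) (hd1 : d < 1) : g d > d := by
  have h := arctan_concave.2 (Set.mem_Icc.2 ⟨le_refl 0, zero_le_one⟩)
    (Set.mem_Icc.2 ⟨zero_le_one, le_refl 1⟩) (by norm_num)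
    (show (0:ℝ) < 1 - d by linarith) hd0 (by ring)
  simp only [smul_eq_mul, mul_zero, mul_one, Real.arctan_zero, zero_add] at h
  have hpos : 0 < Real.arctan 1 := by
    rw [Real.arctan_one]; positivity
  unfold g
  rw [gt_iff_lt, lt_div_iff₀ hpos]
  linarith

theorem stmt_17 (d : ℝ) (hd0 : 0 < d) (hd1 : d < 1) :
    g d > d ∧ |d - 2 * g d| > d := by
  have h := key d hd0 hd1
  refine ⟨h, ?_⟩
  rw [abs_sub_comm, abs_of_pos (by linarith)]
  linarith
end
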